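/- Gaussian elimination for complexes: let X, Y, Z, W, U, V be objects in an additive category, and consider a complex ... → U →u X ⊕ Y →f Z ⊕ W →v V → ... where f is given by a matrix ((A, B),(C, D)). If D : Y → W is an isomorphism, then this complex is homotopy equivalent to the complex ... → U →u' X →(A − B D⁻¹ C) Z →v' V → ..., where u' and v' are the components of u and v. -/

import Mathlib

open CategoryTheory CategoryTheory.Limits ZeroObject

variable {C : Type} [Category C] [Preadditive C] [HasZeroObject C]

/-- The complex `⋯ → 0 → U → X → Z → V → 0 → ⋯` (in cohomological degrees `0,1,2,3`)
associated to three composable maps with vanishing consecutive composites; it models a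
complex whose possibly nonzero part is the displayed window. -/
noncomputable def fourComplex (U X Z V : C) (u : U ⟶ X) (f : X ⟶ Z) (v : Z ⟶ V)
    (h1 : u ≫ f = 0) (h2 : f ≫ v = 0) : CochainComplex C ℕ :=
  CochainComplex.of
    (fun n => match n with | 0 => U | 1 => X | 2 => Z | 3 => V | _ => 0)
    (fun n => match n with | 0 => u | 1 => f | 2 => v | _ + 3 => 0)
    (by
      intro n
      match n with
      | 0 => exact h1
      | 1 => exact h2
      | 2 => exact comp_zero
      | n + 3 => exact zero_comp)


section DLemmas

variable (U X Z V : C) (u : U ⟶ X) (f : X ⟶ Z) (v : Z ⟶ V)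
  (h1 : u ≫ f = 0) (h2 : f ≫ v = 0)

lemma fourComplex_d01 : (fourComplex U X Z V u f v h1 h2).d 0 1 = u := by
  dsimp only [fourComplex, CochainComplex.of]
  exact CochainComplex.of_d _ _ 0

lemma fourComplex_d12 : (fourComplex U X Z V u f v h1 h2).d 1 2 = f := by
  dsimp only [fourComplex, CochainComplex.of]
  exact CochainComplex.of_d _ _ 1

lemma fourComplex_d23 : (fourComplex U X Z V u f v h1 h2).d 2 3 = v :=
  by
  dsimp only [fourComplex, CochainComplex.of]
  exact CochainComplex.of_d _ _ 2

end DLemmas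

section Aux

variable (U X Z V X' Z' : C) (u : U ⟶ X) (f : X ⟶ Z) (v : Z ⟶ V)
  (h1 : u ≫ f = 0) (h2 : f ≫ v = 0)
  (u' : U ⟶ X') (f' : X' ⟶ Z') (v' : Z' ⟶ V)
  (h1' : u' ≫ f' = 0) (h2' : f' ≫ v' = 0)
  (p1 : X ⟶ X') (p2 : Z ⟶ Z') (q1 : X' ⟶ X) (q2 : Z' ⟶ Z)

/-- The chain map between two `fourComplex`es sharing the same ends, induced by middle
components. -/
noncomputable def fourComplexHom (hu : u ≫ p1 = u') (hf : f ≫ p2 = p1 ≫ f')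
    (hv : v = p2 ≫ v') :
    fourComplex U X Z V u f v h1 h2 ⟶ fourComplex U X' Z' V u' f' v' h1' h2' where
  f n := match n with
    | 0 => 𝟙 U
    | 1 => p1
    | 2 => p2
    | 3 => 𝟙 V
    | _ + 4 => 0
  comm' := by
    rintro i j (rfl : i + 1 = j)
    match i with
    | 0 =>
      show 𝟙 U ≫ (fourComplex U X' Z' V u' f' v' h1' h2').d 0 1 =
        (fourComplex U X Z V u f v h1 h2).d 0 1 ≫ p1
      rw [fourComplex_d01, fourComplex_d01]
      exact (Category.id_comp _).trans hu.symm
    | 1 =>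
      show p1 ≫ (fourComplex U X' Z' V u' f' v' h1' h2').d 1 2 =
        (fourComplex U X Z V u f v h1 h2).d 1 2 ≫ p2
      rw [fourComplex_d12, fourComplex_d12]
      exact hf.symm
    | 2 =>
      show p2 ≫ (fourComplex U X' Z' V u' f' v' h1' h2').d 2 3 =
        (fourComplex U X Z V u f v h1 h2).d 2 3 ≫ 𝟙 V
      rw [fourComplex_d23, fourComplex_d23]
      exact ((Category.comp_id v).trans hv).symm
    | 3 => exact (isZero_zero C).eq_of_tgt _ _
    | n + 4 => exact (isZero_zero C).eq_of_src _ _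

end Aux

/-- Auxiliary construction of a homotopy equivalence between two `fourComplex`es from
component data. -/
noncomputable def fourComplexHomotopyEquiv (U X Z V X' Z' : C)
    (u : U ⟶ X) (f : X ⟶ Z) (v : Z ⟶ V)
    (h1 : u ≫ f = 0) (h2 : f ≫ v = 0)
    (u' : U ⟶ X') (f' : X' ⟶ Z') (v' : Z' ⟶ V)
    (h1' : u' ≫ f' = 0) (h2' : f' ≫ v' = 0)
    (p1 : X ⟶ X') (p2 : Z ⟶ Z') (q1 : X' ⟶ X) (q2 : Z' ⟶ Z)
    (hu : u ≫ p1 = u') (hf : f ≫ p2 = p1 ≫ f') (hv : v = p2 ≫ v')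
    (hu' : u' ≫ q1 = u) (hf' : f' ≫ q2 = q1 ≫ f) (hv' : v' = q2 ≫ v)
    (hqp1 : q1 ≫ p1 = 𝟙 X') (hqp2 : q2 ≫ p2 = 𝟙 Z')
    (H : Z ⟶ X) (hH1 : p1 ≫ q1 = f ≫ H + 𝟙 X) (hH2 : p2 ≫ q2 = H ≫ f + 𝟙 Z) :
    HomotopyEquiv (fourComplex U X Z V u f v h1 h2)
      (fourComplex U X' Z' V u' f' v' h1' h2') where
  hom := fourComplexHom U X Z V X' Z' u f v h1 h2 u' f' v' h1' h2' p1 p2 hu hf hv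
  inv := fourComplexHom U X' Z' V X Z u' f' v' h1' h2' u f v h1 h2 q1 q2 hu' hf' hv'
  homotopyHomInvId :=
    { hom := fun i j => match i, j with
        | 2, 1 => H
        | _, _ => 0
      zero := by
        rintro i j hij
        split
        · exact absurd rfl hij
        · rename_i hne
          match i, j, hne with
          | 2, 1, hne => exact (hne rfl rfl).elim
          | 0, _, _ => rfl
          | 1, _, _ => rfl
          | 2, 0, _ => rfl
          | 2, _ + 2, _ => rfl
          | _ + 3, _, _ => rfl
      comm := by
        intro i
        rw [dNext_eq _ (show (ComplexShape.up ℕ).Rel i (i + 1) from rfl), prevD_nat]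
        match i with
        | 0 =>
          show 𝟙 U ≫ 𝟙 U = ((fourComplex U X Z V u f v h1 h2).d 0 1 ≫ (0 : (fourComplex U X Z V u f v h1 h2).X 1 ⟶ U) : U ⟶ U) +
            ((0 : U ⟶ U) ≫ (fourComplex U X Z V u f v h1 h2).d 0 0 : U ⟶ U) + 𝟙 U
          simp
          erw [comp_zero, zero_comp, add_zero]
        | 1 =>
          show p1 ≫ q1 = ((fourComplex U X Z V u f v h1 h2).d 1 2 ≫ H : X ⟶ X) +
            ((0 : X ⟶ U) ≫ (fourComplex U X Z V u f v h1 h2).d 0 1 : X ⟶ X) + 𝟙 X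
          rw [fourComplex_d12, hH1]
          simp
          erw [zero_comp, add_zero]
          rfl
        | 2 =>
          show p2 ≫ q2 = ((fourComplex U X Z V u f v h1 h2).d 2 3 ≫ (0 : (fourComplex U X Z V u f v h1 h2).X 3 ⟶ Z) : Z ⟶ Z) +
            (H ≫ (fourComplex U X Z V u f v h1 h2).d 1 2 : Z ⟶ Z) + 𝟙 Z
          rw [fourComplex_d12, hH2]
          simp
          erw [comp_zero]
        | 3 =>
          show 𝟙 V ≫ 𝟙 V = ((fourComplex U X Z V u f v h1 h2).d 3 4 ≫ (0 : (fourComplex U X Z V u f v h1 h2).X 4 ⟶ V) : V ⟶ V) +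
            ((0 : V ⟶ (fourComplex U X Z V u f v h1 h2).X 2) ≫ (fourComplex U X Z V u f v h1 h2).d 2 3 : V ⟶ V) + 𝟙 V
          simp
          erw [comp_zero, zero_comp, add_zero]
        | n + 4 => exact (isZero_zero C).eq_of_src _ _ }
  homotopyInvHomId := Homotopy.ofEq (by
    ext n
    match n with
    | 0 =>
      show 𝟙 U ≫ 𝟙 U = 𝟙 U
      simp
    | 1 =>
      show q1 ≫ p1 = 𝟙 X'
      exact hqp1
    | 2 =>
      show q2 ≫ p2 = 𝟙 Z'
      exact hqp2
    | 3 =>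
      show 𝟙 V ≫ 𝟙 V = 𝟙 V
      simp
    | n + 4 => exact (isZero_zero C).eq_of_src _ _)

/-- **Gaussian elimination for complexes.** Given a complex
`⋯ → U → X ⊕ Y → Z ⊕ W → V → ⋯` whose middle differential has matrix `((A,B),(C,D))`
with `D : Y ⟶ W` an isomorphism, the complex is homotopy equivalent to
`⋯ → U → X → Z → V → ⋯` with middle differential `A − B D⁻¹ C`, the outer differentials
being the corresponding components of `u` and `v`. -/
theorem gaussian_elimination [HasBinaryBiproducts C]
    (U X Y Z W V : C) (u : U ⟶ X ⊞ Y)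
    (A : X ⟶ Z) (B : Y ⟶ Z) (c : X ⟶ W) (D : Y ⟶ W) [IsIso D]
    (f : X ⊞ Y ⟶ Z ⊞ W) (hf : f = biprod.desc (biprod.lift A c) (biprod.lift B D))
    (v : Z ⊞ W ⟶ V) (h1 : u ≫ f = 0) (h2 : f ≫ v = 0) :
    ∃ (h1' : (u ≫ biprod.fst) ≫ (A - c ≫ inv D ≫ B) = 0)
      (h2' : (A - c ≫ inv D ≫ B) ≫ (biprod.inl ≫ v) = 0),
      Nonempty (HomotopyEquiv
        (fourComplex U (X ⊞ Y) (Z ⊞ W) V u f v h1 h2)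
        (fourComplex U X Z V (u ≫ biprod.fst) (A - c ≫ inv D ≫ B) (biprod.inl ≫ v)
          h1' h2')) := by
  subst hf
  have huZ : u ≫ biprod.fst ≫ A + u ≫ biprod.snd ≫ B = 0 := by
    have h := h1 =≫ biprod.fst
    simp only [zero_comp, Category.assoc, biprod.desc_eq, Preadditive.add_comp,
      biprod.lift_fst] at h
    simpa [Category.assoc] using h
  have huW : u ≫ biprod.fst ≫ c + u ≫ biprod.snd ≫ D = 0 := by
    have h := h1 =≫ biprod.snd
    simp only [zero_comp, Category.assoc, biprod.desc_eq, Preadditive.add_comp,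
      biprod.lift_snd] at h
    simpa [Category.assoc] using h
  have hvZ : A ≫ biprod.inl ≫ v + c ≫ biprod.inr ≫ v = 0 := by
    have h := biprod.inl ≫= h2
    simp only [comp_zero, biprod.inl_desc_assoc, biprod.lift_eq, Preadditive.add_comp,
      Category.assoc] at h
    simpa [Category.assoc] using h
  have hvW : B ≫ biprod.inl ≫ v + D ≫ biprod.inr ≫ v = 0 := by
    have h := biprod.inr ≫= h2
    simp only [comp_zero, biprod.inr_desc_assoc, biprod.lift_eq, Preadditive.add_comp,
      Category.assoc] at h
    simpa [Category.assoc] using h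
  have husnd : u ≫ biprod.snd = -(u ≫ biprod.fst ≫ c ≫ inv D) := by
    have h := huW =≫ inv D
    simp only [Preadditive.add_comp, zero_comp, Category.assoc, IsIso.hom_inv_id,
      Category.comp_id] at h
    exact eq_neg_of_add_eq_zero_right h
  have e2 : inv D ≫ B ≫ biprod.inl ≫ v = -(biprod.inr ≫ v) := by
    have h := inv D ≫= hvW
    simp only [Preadditive.comp_add, comp_zero, IsIso.inv_hom_id_assoc] at h
    exact eq_neg_of_add_eq_zero_left h
  have hvsnd : biprod.inr ≫ v = -(inv D ≫ B ≫ biprod.inl ≫ v) := by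
    rw [e2, neg_neg]
  have h1' : (u ≫ biprod.fst) ≫ (A - c ≫ inv D ≫ B) = 0 := by
    have e1 : u ≫ biprod.fst ≫ c ≫ inv D ≫ B = -(u ≫ biprod.snd ≫ B) := by
      have h := huW =≫ (inv D ≫ B)
      simp only [Preadditive.add_comp, zero_comp, Category.assoc,
        IsIso.hom_inv_id_assoc] at h
      exact eq_neg_of_add_eq_zero_left h
    simp only [Preadditive.comp_sub, Category.assoc, e1, sub_neg_eq_add]
    exact huZ
  have h2' : (A - c ≫ inv D ≫ B) ≫ (biprod.inl ≫ v) = 0 := by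
    simp only [Preadditive.sub_comp, Category.assoc, e2, Preadditive.comp_neg,
      sub_neg_eq_add]
    exact hvZ
  refine ⟨h1', h2', ⟨fourComplexHomotopyEquiv U (X ⊞ Y) (Z ⊞ W) V X Z u
    (biprod.desc (biprod.lift A c) (biprod.lift B D)) v h1 h2
    (u ≫ biprod.fst) (A - c ≫ inv D ≫ B) (biprod.inl ≫ v) h1' h2'
    biprod.fst (biprod.desc (𝟙 Z) (-(inv D ≫ B)))
    (biprod.lift (𝟙 X) (-(c ≫ inv D))) biprod.inl
    rfl ?_ ?_ ?_ ?_ rfl ?_ ?_ (-(biprod.snd ≫ inv D ≫ biprod.inr)) ?_ ?_⟩⟩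
  · -- hf : f ≫ p2 = p1 ≫ f'
    ext
    · simp [Preadditive.comp_sub, Preadditive.sub_comp, Category.assoc, sub_eq_add_neg]
    · simp [Preadditive.comp_sub, Preadditive.sub_comp, Category.assoc, sub_eq_add_neg]
  · -- hv : v = p2 ≫ v'
    ext
    · simp
    · simpa [Category.assoc] using hvsnd
  · -- hu' : u' ≫ q1 = u
    ext
    · simp
    · simpa [Category.assoc] using husnd.symm
  · -- hf' : f' ≫ q2 = q1 ≫ f
    ext
    · simp [Preadditive.comp_sub, Preadditive.sub_comp, Category.assoc, sub_eq_add_neg]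
    · simp [Preadditive.comp_sub, Preadditive.sub_comp, Category.assoc, sub_eq_add_neg]
  · -- hqp1
    simp
  · -- hqp2
    simp
  · -- hH1
    ext
    · simp [Preadditive.comp_sub, Preadditive.sub_comp, Category.assoc, sub_eq_add_neg]
    · simp [Preadditive.comp_sub, Preadditive.sub_comp, Category.assoc, sub_eq_add_neg]
    · simp [Preadditive.comp_sub, Preadditive.sub_comp, Category.assoc, sub_eq_add_neg]
    · simp [Preadditive.comp_sub, Preadditive.sub_comp, Category.assoc, sub_eq_add_neg]
  · -- hH2
    ext
    · simp [Preadditive.comp_sub, Preadditive.sub_comp, Category.assoc, sub_eq_add_neg]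
    · simp [Preadditive.comp_sub, Preadditive.sub_comp, Category.assoc, sub_eq_add_neg]
    · simp [Preadditive.comp_sub, Preadditive.sub_comp, Category.assoc, sub_eq_add_neg]
    · simp [Preadditive.comp_sub, Preadditive.sub_comp, Category.assoc, sub_eq_add_neg]
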